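/- In the setting of the previous statement, assume additionally that all η_t come from a fixed set on which q := sup_η (1 - 2γ_{n-1}η/n)/(1 - 2γ_nη/n) < 1, u_0^{(n)} ≠ 0, and k > (1/2)·log(γn ε (u_0^{(n)})²/(γ1 n Σ_{i=1}^n (u_0^{(i)})²))/log q. Then γn ≤ (u_kᵀ Γ u_k)/(Σ_{i=1}^n (u_k^{(i)})²) ≤ (1+ε)·γn. That is, the Rayleigh quotient of the GD iterate restricted to the data manifold approaches the smallest nonzero eigenvalue γn. -/

import Mathlib

/-- Directional bias of GD: under diagonal GD dynamics
`u_{k+1}⁽ⁱ⁾ = (1 - 2η_k γᵢ/N) u_k⁽ⁱ⁾` (`N = n+2` nonzero eigenvalues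
`γ₀ ≥ … ≥ γ_{N-2} > γ_{N-1} > 0`, `0 < η_k < N/(2γ₀)`), if the contraction
ratios satisfy `(1-2γ_{N-2}η_t/N)/(1-2γ_{N-1}η_t/N) ≤ q < 1` and
`k > (1/2)·log(γ_{N-1} ε (u₀^{(N-1)})²/(γ₀ N ∑ᵢ(u₀⁽ⁱ⁾)²))/log q`, then the
Rayleigh quotient of `u_k` lies in `[γ_{N-1}, (1+ε)γ_{N-1}]`. -/
theorem stmt_13 (n : ℕ) (γ : Fin (n + 2) → ℝ) (hsort : Antitone γ)
    (hpos : 0 < γ (Fin.last (n + 1)))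
    (hstrict : γ (Fin.last (n + 1)) < γ ((Fin.last n).castSucc))
    (η : ℕ → ℝ) (hη : ∀ k, 0 < η k ∧ η k < ((n : ℝ) + 2) / (2 * γ 0))
    (u : ℕ → Fin (n + 2) → ℝ)
    (hupd : ∀ k i, u (k + 1) i = (1 - 2 * η k * γ i / ((n : ℝ) + 2)) * u k i)
    (q ε : ℝ) (hq0 : 0 < q) (hq1 : q < 1) (hε : ε ∈ Set.Ioo (0 : ℝ) 1)
    (hqbound : ∀ t, (1 - 2 * γ ((Fin.last n).castSucc) * η t / ((n : ℝ) + 2)) /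
        (1 - 2 * γ (Fin.last (n + 1)) * η t / ((n : ℝ) + 2)) ≤ q)
    (hu0 : u 0 (Fin.last (n + 1)) ≠ 0)
    (k : ℕ)
    (hk : (k : ℝ) > (1 / 2) *
      Real.log (γ (Fin.last (n + 1)) * ε * (u 0 (Fin.last (n + 1))) ^ 2 /
        (γ 0 * ((n : ℝ) + 2) * ∑ i, (u 0 i) ^ 2)) / Real.log q) :
    γ (Fin.last (n + 1)) ≤ (∑ i, γ i * (u k i) ^ 2) / (∑ i, (u k i) ^ 2) ∧
    (∑ i, γ i * (u k i) ^ 2) / (∑ i, (u k i) ^ 2) ≤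
      (1 + ε) * γ (Fin.last (n + 1)) := by
  set L : Fin (n + 2) := Fin.last (n + 1) with hL
  set P : Fin (n + 2) := (Fin.last n).castSucc with hP
  have hNpos : (0:ℝ) < (n:ℝ) + 2 := by positivity
  have hγL : 0 < γ L := hpos
  have hγpos : ∀ i, 0 < γ i := fun i => lt_of_lt_of_le hγL (hsort (Fin.le_last i))
  have hγ0 : ∀ i, γ i ≤ γ 0 := fun i => hsort (Fin.zero_le i)
  -- positivity of contraction factors
  have hc : ∀ t i, 0 < 1 - 2 * η t * γ i / ((n:ℝ) + 2) := by
    intro t i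
    have h1 := (hη t).1
    have h2 := (hη t).2
    have hγ0pos := hγpos 0
    have hγi := hγpos i
    have hγi0 := hγ0 i
    rw [sub_pos, div_lt_one hNpos]
    have h3 : 2 * γ 0 * η t < (n:ℝ) + 2 := by
      rw [lt_div_iff₀ (by positivity)] at h2
      linarith
    nlinarith
  -- product formula
  have huk : ∀ m i, u m i = (∏ t ∈ Finset.range m, (1 - 2 * η t * γ i / ((n:ℝ)+2))) * u 0 i := by
    intro m i
    induction m with
    | zero => simp
    | succ m ih => rw [hupd, ih, Finset.prod_range_succ]; ring
  -- per-step ratio bound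
  have hcq : ∀ t (i : Fin (n+2)), i ≠ L →
      1 - 2 * η t * γ i / ((n:ℝ)+2) ≤ q * (1 - 2 * η t * γ L / ((n:ℝ)+2)) := by
    intro t i hi
    have hiP : i ≤ P := by
      have h1 : i.val ≠ n + 1 := fun h => hi (Fin.ext (by simpa [hL] using h))
      have h2 : i.val < n + 2 := i.isLt
      rw [Fin.le_def]
      simp only [hP, Fin.coe_castSucc, Fin.val_last]
      omega
    have h1 : γ P ≤ γ i := hsort hiP
    have h2 : 1 - 2 * η t * γ i / ((n:ℝ)+2) ≤ 1 - 2 * η t * γ P / ((n:ℝ)+2) := by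
      have := (hη t).1
      gcongr
    have h3 := hqbound t
    have h4 : 0 < 1 - 2 * γ L * η t / ((n:ℝ)+2) := by
      have h := hc t L
      have e : 2 * γ L * η t / ((n:ℝ)+2) = 2 * η t * γ L / ((n:ℝ)+2) := by ring
      linarith [e]
    rw [div_le_iff₀ h4] at h3
    calc 1 - 2 * η t * γ i / ((n:ℝ)+2) ≤ 1 - 2 * η t * γ P / ((n:ℝ)+2) := h2
      _ = 1 - 2 * γ P * η t / ((n:ℝ)+2) := by ring
      _ ≤ q * (1 - 2 * γ L * η t / ((n:ℝ)+2)) := h3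
      _ = q * (1 - 2 * η t * γ L / ((n:ℝ)+2)) := by ring
  set PL : ℝ := ∏ t ∈ Finset.range k, (1 - 2 * η t * γ L / ((n:ℝ)+2)) with hPL
  have hPLpos : 0 < PL := Finset.prod_pos (fun t _ => hc t L)
  have hprod : ∀ (i : Fin (n+2)), i ≠ L →
      ∏ t ∈ Finset.range k, (1 - 2 * η t * γ i / ((n:ℝ)+2)) ≤ q ^ k * PL := by
    intro i hi
    have h := Finset.prod_le_prod (s := Finset.range k)
      (f := fun t => (1 - 2 * η t * γ i / ((n:ℝ)+2)))
      (g := fun t => q * (1 - 2 * η t * γ L / ((n:ℝ)+2)))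
      (fun t _ => le_of_lt (hc t i)) (fun t _ => hcq t i hi)
    simpa [Finset.prod_mul_distrib, hPL] using h
  set S0 : ℝ := ∑ i, (u 0 i) ^ 2 with hS0
  have hS0pos : 0 < S0 := by
    have h1 : (u 0 L) ^ 2 ≤ S0 :=
      Finset.single_le_sum (fun i _ => sq_nonneg (u 0 i)) (Finset.mem_univ L)
    have h2 : 0 < (u 0 L) ^ 2 := by positivity
    linarith
  -- log estimate : q^(2k) < A
  set A : ℝ := γ L * ε * (u 0 L) ^ 2 / (γ 0 * ((n:ℝ) + 2) * S0) with hA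
  have hεpos : 0 < ε := hε.1
  have hu0sq : 0 < (u 0 L) ^ 2 := by positivity
  have hγ0pos : 0 < γ 0 := hγpos 0
  have hApos : 0 < A := by rw [hA]; positivity
  have hlogq : Real.log q < 0 := Real.log_neg hq0 hq1
  have hqA : q ^ (2 * k) < A := by
    have h1 : (k : ℝ) * Real.log q < (1 / 2) * Real.log A := by
      have h2 := mul_lt_mul_of_neg_right hk hlogq
      rwa [div_mul_cancel₀ _ (ne_of_lt hlogq)] at h2
    have h3 : Real.log (q ^ (2 * k)) < Real.log A := by
      rw [Real.log_pow]
      push_cast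
      linarith
    have h4 := Real.exp_lt_exp.mpr h3
    rwa [Real.exp_log (pow_pos hq0 _), Real.exp_log hApos] at h4
  -- sums at step k
  set S : ℝ := ∑ i, (u k i) ^ 2 with hS
  set T : ℝ := ∑ i ∈ Finset.univ.erase L, (u k i) ^ 2 with hT
  have hukL : u k L = PL * u 0 L := huk k L
  have hukLsq : (u k L) ^ 2 = PL ^ 2 * (u 0 L) ^ 2 := by rw [hukL]; ring
  have hukLpos : 0 < (u k L) ^ 2 := by rw [hukLsq]; positivity
  have hSL : (u k L) ^ 2 ≤ S :=
    Finset.single_le_sum (fun i _ => sq_nonneg (u k i)) (Finset.mem_univ L)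
  have hSpos : 0 < S := lt_of_lt_of_le hukLpos hSL
  have hTS : T + (u k L) ^ 2 = S := Finset.sum_erase_add _ _ (Finset.mem_univ L)
  -- bound on T
  have hTbound : T ≤ q ^ (2 * k) * PL ^ 2 * S0 := by
    have step : ∀ i ∈ Finset.univ.erase L, (u k i) ^ 2 ≤ q ^ (2 * k) * PL ^ 2 * (u 0 i) ^ 2 := by
      intro i hi
      have hiL : i ≠ L := Finset.ne_of_mem_erase hi
      have h1 : 0 ≤ ∏ t ∈ Finset.range k, (1 - 2 * η t * γ i / ((n:ℝ)+2)) :=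
        Finset.prod_nonneg (fun t _ => (hc t i).le)
      have h2 := hprod i hiL
      have h3 : (∏ t ∈ Finset.range k, (1 - 2 * η t * γ i / ((n:ℝ)+2))) ^ 2 ≤ (q ^ k * PL) ^ 2 :=
        pow_le_pow_left₀ h1 h2 2
      calc (u k i) ^ 2
          = (∏ t ∈ Finset.range k, (1 - 2 * η t * γ i / ((n:ℝ)+2))) ^ 2 * (u 0 i) ^ 2 := by
            rw [huk k i]; ring
        _ ≤ (q ^ k * PL) ^ 2 * (u 0 i) ^ 2 :=
            mul_le_mul_of_nonneg_right h3 (sq_nonneg _)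
        _ = q ^ (2 * k) * PL ^ 2 * (u 0 i) ^ 2 := by
            rw [mul_pow, ← pow_mul]; ring_nf
    calc T ≤ ∑ i ∈ Finset.univ.erase L, q ^ (2 * k) * PL ^ 2 * (u 0 i) ^ 2 :=
          Finset.sum_le_sum step
      _ ≤ ∑ i, q ^ (2 * k) * PL ^ 2 * (u 0 i) ^ 2 :=
          Finset.sum_le_sum_of_subset_of_nonneg (Finset.erase_subset _ _)
            (fun i _ _ => by positivity)
      _ = q ^ (2 * k) * PL ^ 2 * S0 := by rw [← Finset.mul_sum]
  -- key scalar inequality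
  have hkey : γ 0 * (q ^ (2 * k)) * S0 ≤ ε * γ L * (u 0 L) ^ 2 := by
    have h1 : γ 0 * (q ^ (2 * k)) * S0 < γ 0 * A * S0 := by
      have := mul_lt_mul_of_pos_right (mul_lt_mul_of_pos_left hqA hγ0pos) hS0pos
      linarith
    have h2 : γ 0 * A * S0 = ε * γ L * (u 0 L) ^ 2 / ((n:ℝ) + 2) := by
      rw [hA]; field_simp
    have h3 : ε * γ L * (u 0 L) ^ 2 / ((n:ℝ) + 2) ≤ ε * γ L * (u 0 L) ^ 2 := by
      rw [div_le_iff₀ hNpos]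
      nlinarith [mul_nonneg (mul_nonneg hεpos.le hγL.le) (sq_nonneg (u 0 L)),
        Nat.cast_nonneg (α := ℝ) n]
    linarith
  -- γ0 * T ≤ ε γL (u k L)^2
  have hTfinal : γ 0 * T ≤ ε * γ L * (u k L) ^ 2 := by
    have h4 : γ 0 * T ≤ γ 0 * (q ^ (2 * k) * PL ^ 2 * S0) :=
      mul_le_mul_of_nonneg_left hTbound hγ0pos.le
    have h5 : γ 0 * (q ^ (2 * k) * PL ^ 2 * S0) = (γ 0 * (q ^ (2 * k)) * S0) * PL ^ 2 := by ring
    have h6 : (γ 0 * (q ^ (2 * k)) * S0) * PL ^ 2 ≤ (ε * γ L * (u 0 L) ^ 2) * PL ^ 2 :=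
      mul_le_mul_of_nonneg_right hkey (sq_nonneg PL)
    have h7 : (ε * γ L * (u 0 L) ^ 2) * PL ^ 2 = ε * γ L * (u k L) ^ 2 := by
      rw [hukLsq]; ring
    linarith
  -- upper bound on numerator
  have hnum : ∑ i, γ i * (u k i) ^ 2 ≤ γ L * S + γ 0 * T := by
    have e : ∑ i, γ i * (u k i) ^ 2
        = γ L * (u k L) ^ 2 + ∑ i ∈ Finset.univ.erase L, γ i * (u k i) ^ 2 :=
      (Finset.add_sum_erase _ _ (Finset.mem_univ L)).symm
    have h1 : ∑ i ∈ Finset.univ.erase L, γ i * (u k i) ^ 2 ≤ γ 0 * T := by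
      rw [hT, Finset.mul_sum]
      exact Finset.sum_le_sum (fun i _ => mul_le_mul_of_nonneg_right (hγ0 i) (sq_nonneg _))
    have h2 : γ L * (u k L) ^ 2 ≤ γ L * S := mul_le_mul_of_nonneg_left hSL hγL.le
    linarith
  -- lower bound on numerator
  have hden : γ L * S ≤ ∑ i, γ i * (u k i) ^ 2 := by
    rw [hS, Finset.mul_sum]
    exact Finset.sum_le_sum (fun i _ =>
      mul_le_mul_of_nonneg_right (hsort (Fin.le_last i)) (sq_nonneg _))
  constructor
  · rw [le_div_iff₀ hSpos]
    linarith
  · rw [div_le_iff₀ hSpos]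
    have h8 : ε * γ L * (u k L) ^ 2 ≤ ε * γ L * S :=
      mul_le_mul_of_nonneg_left hSL (by positivity)
    have expand : (1 + ε) * γ L * S = γ L * S + ε * γ L * S := by ring
    linarith
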